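/- arXiv:0803.0831 — 4 statements merged into one kernel-verified Lean document; each statement's English description precedes it below -/
import Mathlib

section
/- Let $q = \bar{q}\tilde{q}$ with $(\bar{q},\tilde{q})=1$, let $(a,q)=1$, and write $a = \tilde{a}\bar{q} + \bar{a}\tilde{q}$ with $(\tilde{a},\tilde{q})=1$ and $(\bar{a},\bar{q})=1$. Then the generalized Ramanujan sum satisfies $c_j(a,q) = c_j(\tilde{a},\tilde{q}) \cdot c_j(\bar{a},\bar{q})$. -/
open Finset

/-- `e(x) = e^{2πix}`. -/
noncomputable def e (x : ℂ) : ℂ := Complex.exp (2 * Real.pi * Complex.I * x)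

/-- The generalized Ramanujan sum. -/
noncomputable def ramanujanC (aj : ℤ) (qj : ℕ) (a : ℤ) (q : ℕ) : ℂ :=
  ∑ k ∈ (Finset.Icc 1 q).filter
      (fun k => Nat.Coprime k q ∧ (k : ℤ) % (Nat.gcd qj q : ℤ) = aj % (Nat.gcd qj q : ℤ)),
    e ((a : ℂ) * k / q)

lemma e_add (x y : ℂ) : e (x + y) = e x * e y := by
  simp [e, mul_add, Complex.exp_add]

lemma e_int (n : ℤ) : e (n : ℂ) = 1 := by
  have h : (2 : ℂ) * Real.pi * Complex.I * n = n * (2 * Real.pi * Complex.I) := by ring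
  rw [e, h]
  exact Complex.exp_int_mul_two_pi_mul_I n

lemma e_congr {q : ℕ} (hq : 0 < q) {m n : ℤ} (h : m ≡ n [ZMOD (q : ℤ)]) :
    e ((m : ℂ) / q) = e ((n : ℂ) / q) := by
  obtain ⟨t, ht⟩ := Int.ModEq.dvd h  -- m - n = q * t ? check direction
  have hq0 : (q : ℂ) ≠ 0 := by exact_mod_cast hq.ne'
  have hn : (n : ℂ) = m + q * t := by
    have : n = m + (q : ℤ) * t := by linarith
    exact_mod_cast this
  have h2 : ((m : ℂ) + q * t) / q = m / q + (t : ℂ) := by field_simp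
  rw [hn, h2, e_add]
  have := e_int t
  rw [this, mul_one]

open Classical in
lemma ram_eq_zmod (aj : ℤ) (qj : ℕ) (a : ℤ) (q : ℕ) [NeZero q] (hq : 0 < q) :
    ramanujanC aj qj a q =
      ∑ k : ZMod q,
        if IsUnit k ∧ ((k.val : ℤ) % (Nat.gcd qj q : ℤ) = aj % (Nat.gcd qj q : ℤ))
        then e ((a : ℂ) * k.val / q) else 0 := by
  haveI : NeZero q := ⟨hq.ne'⟩
  rw [ramanujanC, Finset.sum_filter]
  refine Finset.sum_nbij' (fun k : ℕ => (k : ZMod q))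
    (fun x : ZMod q => if x.val = 0 then q else x.val)
    (fun _ _ => Finset.mem_univ _) ?_ ?_ ?_ ?_
  · intro x _
    rcases eq_or_ne x.val 0 with h | h
    · rw [if_pos h]
      exact Finset.mem_Icc.mpr ⟨hq, le_refl q⟩
    · rw [if_neg h]
      exact Finset.mem_Icc.mpr ⟨Nat.one_le_iff_ne_zero.mpr h, (x.val_lt).le⟩
  · intro k hk
    obtain ⟨hk1, hk2⟩ := Finset.mem_Icc.mp hk
    have hval : (k : ZMod q).val = k % q := ZMod.val_natCast q k
    rcases eq_or_lt_of_le hk2 with rfl | hlt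
    · simp [hval]
    · have : k % q = k := Nat.mod_eq_of_lt hlt
      simp only [hval, this]
      rw [if_neg (by omega)]
  · intro x _
    rcases eq_or_ne x.val 0 with h | h
    · rw [if_pos h]
      have : x = 0 := by
        have := ZMod.natCast_val (R := ZMod q) x
        rw [ZMod.cast_id] at this
        rw [← this, h, Nat.cast_zero]
      simp [this]
    · rw [if_neg h]
      have := ZMod.natCast_val (R := ZMod q) x
      rwa [ZMod.cast_id] at this
  · intro k hk
    have hval : (k : ZMod q).val = k % q := ZMod.val_natCast q k
    have hgdvd : ((Nat.gcd qj q : ℤ)) ∣ (q : ℤ) :=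
      Int.natCast_dvd_natCast.mpr (Nat.gcd_dvd_right qj q)
    have hc2 : ((k % q : ℕ) : ℤ) % (Nat.gcd qj q : ℤ) = (k : ℤ) % (Nat.gcd qj q : ℤ) := by
      push_cast [Int.natCast_mod]
      exact Int.emod_emod_of_dvd _ hgdvd
    have hcond : (IsUnit ((k : ZMod q)) ∧
        (((k : ZMod q).val : ℤ) % (Nat.gcd qj q : ℤ) = aj % (Nat.gcd qj q : ℤ)))
        ↔ (Nat.Coprime k q ∧ (k : ℤ) % (Nat.gcd qj q : ℤ) = aj % (Nat.gcd qj q : ℤ)) := by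
      rw [ZMod.isUnit_iff_coprime, hval, hc2]
    have hv : e ((a : ℂ) * ((k : ZMod q).val) / q) = e ((a : ℂ) * k / q) := by
      rw [hval]
      have hcc : ((k % q : ℕ) : ℂ) = (((k : ℤ) % (q : ℤ) : ℤ) : ℂ) := by
        rw [← Int.natCast_mod]; norm_cast
      rw [hcc]
      have h1 : (a : ℂ) * ((((k : ℤ) % (q : ℤ) : ℤ)) : ℂ) / q
          = (((a * ((k : ℤ) % (q : ℤ)) : ℤ)) : ℂ) / q := by push_cast; ring
      have h2 : (a : ℂ) * (k : ℂ) / q = (((a * k : ℤ)) : ℂ) / q := by push_cast; ring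
      rw [h1, h2]
      exact e_congr hq (Int.ModEq.mul_left a (Int.emod_emod_of_dvd k dvd_rfl))
    by_cases hc : Nat.Coprime k q ∧ (k : ℤ) % (Nat.gcd qj q : ℤ) = aj % (Nat.gcd qj q : ℤ)
    · rw [if_pos hc, if_pos (hcond.mpr hc)]
      exact hv.symm
    · rw [if_neg hc, if_neg (fun h => hc (hcond.mp h))]

lemma chineseRemainder_apply' {m n : ℕ} (hm : 0 < m) (hn : 0 < n) (h : m.Coprime n)
    (k : ZMod (m * n)) :
    ZMod.chineseRemainder h k = ((k.val : ZMod m), (k.val : ZMod n)) := by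
  haveI : NeZero (m * n) := ⟨by positivity⟩
  have h1 : ZMod.chineseRemainder h k =
      ZMod.castHom (show Nat.lcm m n ∣ m * n by simp [Nat.lcm_dvd_iff]) (ZMod m × ZMod n) k := rfl
  rw [h1, ZMod.castHom_apply, ← ZMod.natCast_val]
  simp [Prod.ext_iff]

theorem stmt1 (qbar qtil : ℕ) (hqbar : 1 ≤ qbar) (hqtil : 1 ≤ qtil)
    (hco : Nat.Coprime qbar qtil)
    (a atil abar : ℤ) (ha : Int.gcd a (qbar * qtil) = 1)
    (hsplit : a = atil * qbar + abar * qtil)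
    (hatil : Int.gcd atil qtil = 1) (habar : Int.gcd abar qbar = 1)
    (qj : ℕ) (hqj : 1 ≤ qj) (aj : ℤ) :
    ramanujanC aj qj a (qbar * qtil) =
      ramanujanC aj qj atil qtil * ramanujanC aj qj abar qbar := by
  have hq : 0 < qbar * qtil := by positivity
  haveI : NeZero (qbar * qtil) := ⟨hq.ne'⟩
  haveI : NeZero qbar := ⟨by omega⟩
  haveI : NeZero qtil := ⟨by omega⟩
  set g := Nat.gcd qj (qbar * qtil) with hgdef
  set gb := Nat.gcd qj qbar with hgbdef
  set gt := Nat.gcd qj qtil with hgtdef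
  -- coprimality of the gcd factors
  have hgbt : Nat.Coprime gb gt :=
    Nat.Coprime.coprime_dvd_left (Nat.gcd_dvd_right qj qbar)
      (Nat.Coprime.coprime_dvd_right (Nat.gcd_dvd_right qj qtil) hco)
  -- multiplicativity of the gcd
  have hgmul : g = gb * gt := by
    have h1 : Nat.gcd g qbar * Nat.gcd g qtil = g :=
      (Nat.gcd_mul_gcd_eq_iff_dvd_mul_of_coprime hco).mpr (Nat.gcd_dvd_right _ _)
    have h2 : Nat.gcd g qbar = gb := by
      rw [hgdef, Nat.gcd_assoc, Nat.gcd_eq_right (dvd_mul_right qbar qtil)]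
    have h3 : Nat.gcd g qtil = gt := by
      rw [hgdef, Nat.gcd_assoc, Nat.gcd_eq_right (dvd_mul_left qtil qbar)]
    rw [h2, h3] at h1
    exact h1.symm
  have hgz : (g : ℤ) = (gb : ℤ) * (gt : ℤ) := by exact_mod_cast congrArg Nat.cast hgmul
  rw [ram_eq_zmod aj qj a (qbar * qtil) hq,
      ram_eq_zmod aj qj atil qtil (by omega),
      ram_eq_zmod aj qj abar qbar (by omega),
      ← hgdef, ← hgbdef, ← hgtdef]
  -- the CRT bijection
  have hψ : Function.Bijective
      (fun k : ZMod (qbar * qtil) => ((k.val : ZMod qbar), (k.val : ZMod qtil))) := by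
    have heq : (fun k : ZMod (qbar * qtil) => ((k.val : ZMod qbar), (k.val : ZMod qtil)))
        = ⇑(ZMod.chineseRemainder hco) := by
      funext k
      exact (chineseRemainder_apply' (by omega) (by omega) hco k).symm
    rw [heq]
    exact (ZMod.chineseRemainder hco).toEquiv.bijective
  -- pointwise identity
  have key : ∀ k : ZMod (qbar * qtil),
      (if IsUnit k ∧ ((k.val : ℤ) % (g : ℤ) = aj % (g : ℤ))
        then e ((a : ℂ) * k.val / (qbar * qtil : ℕ)) else 0)
      = (if IsUnit ((k.val : ZMod qtil)) ∧
            ((((k.val : ZMod qtil)).val : ℤ) % (gt : ℤ) = aj % (gt : ℤ))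
          then e ((atil : ℂ) * ((k.val : ZMod qtil)).val / qtil) else 0)
        * (if IsUnit ((k.val : ZMod qbar)) ∧
            ((((k.val : ZMod qbar)).val : ℤ) % (gb : ℤ) = aj % (gb : ℤ))
          then e ((abar : ℂ) * ((k.val : ZMod qbar)).val / qbar) else 0) := by
    intro k
    set v := k.val with hvdef
    have hk : k = (v : ZMod (qbar * qtil)) := by
      rw [hvdef, ZMod.natCast_val, ZMod.cast_id]
    have hu : IsUnit k ↔ v.Coprime qbar ∧ v.Coprime qtil := by
      rw [← Nat.coprime_mul_iff_right, ← ZMod.isUnit_iff_coprime v (qbar * qtil), ← hk]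
    have hub : IsUnit ((v : ZMod qbar)) ↔ v.Coprime qbar := ZMod.isUnit_iff_coprime v qbar
    have hut : IsUnit ((v : ZMod qtil)) ↔ v.Coprime qtil := ZMod.isUnit_iff_coprime v qtil
    have hvb : ((v : ZMod qbar)).val = v % qbar := ZMod.val_natCast qbar v
    have hvt : ((v : ZMod qtil)).val = v % qtil := ZMod.val_natCast qtil v
    have hcb : ((v % qbar : ℕ) : ℤ) % (gb : ℤ) = (v : ℤ) % (gb : ℤ) := by
      rw [Int.natCast_mod]
      exact Int.emod_emod_of_dvd _ (Int.natCast_dvd_natCast.mpr (Nat.gcd_dvd_right qj qbar))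
    have hct : ((v % qtil : ℕ) : ℤ) % (gt : ℤ) = (v : ℤ) % (gt : ℤ) := by
      rw [Int.natCast_mod]
      exact Int.emod_emod_of_dvd _ (Int.natCast_dvd_natCast.mpr (Nat.gcd_dvd_right qj qtil))
    have hsplitcong : ((v : ℤ) % (g : ℤ) = aj % (g : ℤ)) ↔
        (((v : ℤ) % (gb : ℤ) = aj % (gb : ℤ)) ∧ ((v : ℤ) % (gt : ℤ) = aj % (gt : ℤ))) := by
      have h := Int.modEq_and_modEq_iff_modEq_mul (a := (v : ℤ)) (b := aj)
        (m := (gb : ℤ)) (n := (gt : ℤ)) (by simpa using hgbt)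
      rw [hgz]
      exact h.symm
    have hPiff : (IsUnit k ∧ ((v : ℤ) % (g : ℤ) = aj % (g : ℤ))) ↔
        ((IsUnit ((v : ZMod qtil)) ∧
            ((((v : ZMod qtil)).val : ℤ) % (gt : ℤ) = aj % (gt : ℤ))) ∧
         (IsUnit ((v : ZMod qbar)) ∧
            ((((v : ZMod qbar)).val : ℤ) % (gb : ℤ) = aj % (gb : ℤ)))) := by
      rw [hu, hsplitcong, hut, hub, hvt, hvb, hct, hcb]
      tauto
    have hb0 : (qbar : ℂ) ≠ 0 := by exact_mod_cast (by omega : qbar ≠ 0)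
    have ht0 : (qtil : ℂ) ≠ 0 := by exact_mod_cast (by omega : qtil ≠ 0)
    have hccb : ((v % qbar : ℕ) : ℂ) = (((v : ℤ) % (qbar : ℤ) : ℤ) : ℂ) := by
      rw [← Int.natCast_mod]; norm_cast
    have hcct : ((v % qtil : ℕ) : ℂ) = (((v : ℤ) % (qtil : ℤ) : ℤ) : ℂ) := by
      rw [← Int.natCast_mod]; norm_cast
    have hval : e ((a : ℂ) * v / (qbar * qtil : ℕ))
        = e ((atil : ℂ) * ((v % qtil : ℕ) : ℂ) / qtil)
          * e ((abar : ℂ) * ((v % qbar : ℕ) : ℂ) / qbar) := by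
      rw [← e_add, hccb, hcct]
      have h1 : (atil : ℂ) * (((v : ℤ) % (qtil : ℤ) : ℤ) : ℂ) / qtil
            + (abar : ℂ) * (((v : ℤ) % (qbar : ℤ) : ℤ) : ℂ) / qbar
          = (((atil * ((v : ℤ) % (qtil : ℤ)) * qbar
              + abar * ((v : ℤ) % (qbar : ℤ)) * qtil : ℤ)) : ℂ) / ((qbar * qtil : ℕ) : ℂ) := by
        push_cast
        rw [div_add_div _ _ ht0 hb0, show (qtil : ℂ) * qbar = qbar * qtil by ring]
        congr 1
        ring
      have h2 : (a : ℂ) * v / ((qbar * qtil : ℕ) : ℂ)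
          = (((a * (v : ℤ) : ℤ)) : ℂ) / ((qbar * qtil : ℕ) : ℂ) := by push_cast; ring
      rw [h1, h2]
      refine e_congr hq ?_
      refine Int.modEq_iff_dvd.mpr ?_
      refine ⟨-(atil * ((v : ℤ) / qtil) + abar * ((v : ℤ) / qbar)), ?_⟩
      rw [hsplit, Int.emod_def, Int.emod_def]
      push_cast
      ring
    by_cases hP : IsUnit k ∧ ((v : ℤ) % (g : ℤ) = aj % (g : ℤ))
    · rw [if_pos hP, if_pos (hPiff.mp hP).1, if_pos (hPiff.mp hP).2, hvt, hvb]
      exact hval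
    · rw [if_neg hP]
      rcases not_and_or.mp (mt hPiff.mpr hP) with h | h
      · rw [if_neg h, zero_mul]
      · rw [if_neg h, mul_zero]
  rw [Fintype.sum_bijective _ hψ _
    (fun p : ZMod qbar × ZMod qtil =>
      (if IsUnit p.2 ∧ ((p.2.val : ℤ) % (gt : ℤ) = aj % (gt : ℤ))
        then e ((atil : ℂ) * p.2.val / qtil) else 0)
      * (if IsUnit p.1 ∧ ((p.1.val : ℤ) % (gb : ℤ) = aj % (gb : ℤ))
        then e ((abar : ℂ) * p.1.val / qbar) else 0)) key]
  rw [Fintype.sum_prod_type]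
  simp_rw [← Finset.sum_mul]
  rw [← Finset.mul_sum]
end

section
/- Let $n \geq 1$, $Q \geq 1$, $H > 0$, and $b_1, \dots, b_n \in \mathbb{C}$. Then $\sum_{Q < q \leq 2Q} q \max_{0 \leq a < q} \left| \sum_{m \leq n, m \equiv a \pmod q} b_m \right|^2 \ll (n^2 + Q^2) H^{-1} (\log 2Q) \max_{m \leq n} |b_m|^2 + (n + Q^2) H (\log 2Q) \sum_{m \leq n} |b_m|^2$, with an absolute implied constant. -/
open Finset

-- harmonic sum bound
private lemma harm10 (N : ℕ) (hN : 1 ≤ N) : ∑ d ∈ Icc 1 N, (1:ℝ)/d ≤ 1 + Real.log N := by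
  induction N, hN using Nat.le_induction with
  | base => simp
  | succ N hN ih =>
    rw [Finset.sum_Icc_succ_top (by omega)]
    have h1 : Real.log ((N:ℝ)/(N+1)) ≤ (N:ℝ)/(N+1) - 1 :=
      Real.log_le_sub_one_of_pos (by positivity)
    have h2 : Real.log ((N:ℝ)/(N+1)) = Real.log N - Real.log (N+1) := by
      rw [Real.log_div (by positivity) (by positivity)]
    have h3 : (N:ℝ)/(N+1) - 1 = -(1/(N+1)) := by field_simp; ring
    have h4 : Real.log N + 1/((N:ℝ)+1) ≤ Real.log (N+1) := by
      rw [h2, h3] at h1; linarith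
    push_cast
    push_cast at ih
    linarith

-- card of a set of elements pairwise congruent mod L
private lemma card_class10 (n L : ℕ) (S : Finset ℕ) (hS : S ⊆ Icc 1 n)
    (h : ∀ a ∈ S, ∀ b ∈ S, a % L = b % L) : S.card ≤ n / L + 1 := by
  have : S.card ≤ (Finset.range (n/L + 1)).card := by
    apply Finset.card_le_card_of_injOn (fun m => m / L)
    · intro m hm
      simp only [Finset.mem_range]
      have hmn : m ≤ n := (Finset.mem_Icc.mp (hS hm)).2
      have := Nat.div_le_div_right (c := L) hmn
      simpa using (show m / L < n / L + 1 by omega)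
    · intro a ha b hb hab
      simp only at hab
      have h1 := Nat.div_add_mod a L
      have h2 := Nat.div_add_mod b L
      have h3 := h a ha b hb
      rw [← h1, ← h2, hab, h3]
  simpa using this

-- count of multiples of d in Ioc Q (2Q)
private lemma card_mult10 (Q d : ℕ) (hd : 0 < d) :
    ((Finset.Ioc Q (2*Q)).filter (fun q => d ∣ q)).card ≤ 2*Q/d := by
  classical
  apply le_trans (Finset.card_le_card_of_injOn (fun q => q / d)
    (t := Finset.Icc 1 (2*Q/d)) ?_ ?_) (by simp)
  · intro q hq
    simp only [Finset.mem_coe, Finset.mem_filter, Finset.mem_Ioc] at hq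
    obtain ⟨⟨hq1, hq2⟩, hdq⟩ := hq
    simp only [Finset.mem_coe, Finset.mem_Icc]
    constructor
    · have : 0 < q := by omega
      exact Nat.one_le_div_iff hd |>.mpr (Nat.le_of_dvd this hdq)
    · exact Nat.div_le_div_right hq2
  · intro a ha b hb hab
    simp only [Finset.mem_coe, Finset.mem_filter] at ha hb
    have h1 := Nat.div_mul_cancel ha.2
    have h2 := Nat.div_mul_cancel hb.2
    simp only at hab
    rw [← h1, ← h2, hab]

-- gcd identity as a sum of totients over Icc
private lemma gcd_eq_sum10 (Q q q' : ℕ) (hq : q ∈ Finset.Ioc Q (2*Q))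
    (hq' : q' ∈ Finset.Ioc Q (2*Q)) :
    Nat.gcd q q' = ∑ d ∈ Finset.Icc 1 (2*Q), if d ∣ q ∧ d ∣ q' then d.totient else 0 := by
  simp only [Finset.mem_Ioc] at hq hq'
  rw [← Finset.sum_filter]
  have hset : (Finset.Icc 1 (2*Q)).filter (fun d => d ∣ q ∧ d ∣ q') = (Nat.gcd q q').divisors := by
    ext d
    simp only [Finset.mem_filter, Finset.mem_Icc, Nat.mem_divisors, Nat.dvd_gcd_iff]
    constructor
    · rintro ⟨⟨h1, h2⟩, h3⟩
      exact ⟨h3, (Nat.gcd_pos_of_pos_left q' (show 0 < q by omega)).ne'⟩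
    · rintro ⟨⟨h1, h2⟩, h3⟩
      have hg : 0 < Nat.gcd q q' := Nat.pos_of_ne_zero h3
      have hd : 0 < d := Nat.pos_of_dvd_of_pos h1 (by omega)
      have hdle : d ≤ q := Nat.le_of_dvd (by omega) h1
      exact ⟨⟨hd, by omega⟩, h1, h2⟩
  rw [hset, Nat.sum_totient]

private lemma gcd_sum_bound10 (Q : ℕ) (hQ : 1 ≤ Q) :
    ∑ q ∈ Finset.Ioc Q (2*Q), ∑ q' ∈ Finset.Ioc Q (2*Q), (Nat.gcd q q' : ℝ)
      ≤ 4 * (Q:ℝ)^2 * (1 + Real.log (2*Q)) := by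
  classical
  set I := Finset.Ioc Q (2*Q) with hI
  have step1 : ∑ q ∈ I, ∑ q' ∈ I, (Nat.gcd q q' : ℝ)
      = ∑ d ∈ Finset.Icc 1 (2*Q), (d.totient : ℝ) *
          ((I.filter (fun q => d ∣ q)).card : ℝ)^2 := by
    have hwk : ∀ q ∈ I, ∀ q' ∈ I, (Nat.gcd q q' : ℝ)
        = ∑ d ∈ Finset.Icc 1 (2*Q), if d ∣ q ∧ d ∣ q' then (d.totient:ℝ) else 0 := by
      intro q hq q' hq'
      rw [gcd_eq_sum10 Q q q' hq hq']
      push_cast [Finset.sum_ite, Finset.sum_const_zero]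
      rfl
    calc ∑ q ∈ I, ∑ q' ∈ I, (Nat.gcd q q' : ℝ)
        = ∑ q ∈ I, ∑ q' ∈ I, ∑ d ∈ Finset.Icc 1 (2*Q),
            (if d ∣ q ∧ d ∣ q' then (d.totient:ℝ) else 0) := by
          apply Finset.sum_congr rfl; intro q hq
          apply Finset.sum_congr rfl; intro q' hq'
          exact hwk q hq q' hq'
      _ = ∑ d ∈ Finset.Icc 1 (2*Q), ∑ q ∈ I, ∑ q' ∈ I,
            (if d ∣ q ∧ d ∣ q' then (d.totient:ℝ) else 0) := by
          rw [show (∑ q ∈ I, ∑ q' ∈ I, ∑ d ∈ Finset.Icc 1 (2*Q),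
              (if d ∣ q ∧ d ∣ q' then (d.totient:ℝ) else 0))
            = ∑ q ∈ I, ∑ d ∈ Finset.Icc 1 (2*Q), ∑ q' ∈ I,
              (if d ∣ q ∧ d ∣ q' then (d.totient:ℝ) else 0)
            from Finset.sum_congr rfl (fun q _ => Finset.sum_comm)]
          exact Finset.sum_comm
      _ = ∑ d ∈ Finset.Icc 1 (2*Q), (d.totient : ℝ) *
            ((I.filter (fun q => d ∣ q)).card : ℝ)^2 := by
          apply Finset.sum_congr rfl; intro d _
          have inner : ∑ q' ∈ I, (if d ∣ q' then (d.totient:ℝ) else 0)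
              = ((I.filter (fun q => d ∣ q)).card : ℝ) * (d.totient:ℝ) := by
            rw [← Finset.sum_filter, Finset.sum_const, nsmul_eq_mul]
          calc ∑ q ∈ I, ∑ q' ∈ I, (if d ∣ q ∧ d ∣ q' then (d.totient:ℝ) else 0)
              = ∑ q ∈ I, (if d ∣ q then ((I.filter (fun q => d ∣ q)).card : ℝ) * (d.totient:ℝ) else 0) := by
                apply Finset.sum_congr rfl; intro q _
                by_cases h : d ∣ q
                · simp only [h, true_and, if_true]
                  exact inner
                · simp [h]
            _ = ((I.filter (fun q => d ∣ q)).card : ℝ) *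
                  (((I.filter (fun q => d ∣ q)).card : ℝ) * (d.totient:ℝ)) := by
                rw [← Finset.sum_filter, Finset.sum_const, nsmul_eq_mul]
            _ = (d.totient : ℝ) * ((I.filter (fun q => d ∣ q)).card : ℝ)^2 := by ring
  rw [step1]
  have step2 : ∀ d ∈ Finset.Icc 1 (2*Q), (d.totient : ℝ) *
      ((I.filter (fun q => d ∣ q)).card : ℝ)^2 ≤ 4 * (Q:ℝ)^2 * (1/d) := by
    intro d hd
    simp only [Finset.mem_Icc] at hd
    have hd0 : 0 < d := hd.1
    have hcard : ((I.filter (fun q => d ∣ q)).card : ℝ) ≤ 2*(Q:ℝ)/d := by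
      calc ((I.filter (fun q => d ∣ q)).card : ℝ) ≤ ((2*Q/d : ℕ) : ℝ) := by
            exact_mod_cast card_mult10 Q d hd0
        _ ≤ (2*(Q:ℝ))/d := by
            have := Nat.cast_div_le (α := ℝ) (m := 2*Q) (n := d)
            push_cast at this ⊢
            exact this
    have htot : (d.totient : ℝ) ≤ d := by exact_mod_cast Nat.totient_le d
    have hc0 : (0:ℝ) ≤ ((I.filter (fun q => d ∣ q)).card : ℝ) := by positivity
    have hd0' : (0:ℝ) < d := by exact_mod_cast hd0
    calc (d.totient : ℝ) * ((I.filter (fun q => d ∣ q)).card : ℝ)^2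
        ≤ (d:ℝ) * (2*(Q:ℝ)/d)^2 := by
          apply mul_le_mul htot (by apply pow_le_pow_left₀ hc0 hcard) (by positivity) (by positivity)
      _ = 4 * (Q:ℝ)^2 * (1/d) := by field_simp; ring
  calc ∑ d ∈ Finset.Icc 1 (2*Q), (d.totient : ℝ) * ((I.filter (fun q => d ∣ q)).card : ℝ)^2
      ≤ ∑ d ∈ Finset.Icc 1 (2*Q), 4 * (Q:ℝ)^2 * (1/d) := Finset.sum_le_sum step2
    _ = 4 * (Q:ℝ)^2 * ∑ d ∈ Finset.Icc 1 (2*Q), (1:ℝ)/d := by rw [Finset.mul_sum]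
    _ ≤ 4 * (Q:ℝ)^2 * (1 + Real.log (2*Q)) := by
        apply mul_le_mul_of_nonneg_left _ (by positivity)
        have := harm10 (2*Q) (by omega)
        push_cast at this ⊢
        exact this

private lemma mod_lcm10 {q q' a b : ℕ} (h1 : a % q = b % q) (h2 : a % q' = b % q') :
    a % Nat.lcm q q' = b % Nat.lcm q q' := by
  have key : ∀ x y : ℕ, x ≤ y → x % q = y % q → x % q' = y % q' →
      x % Nat.lcm q q' = y % Nat.lcm q q' := by
    intro x y hxy m1 m2
    have d1 : q ∣ y - x := (Nat.modEq_iff_dvd' hxy).mp m1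
    have d2 : q' ∣ y - x := (Nat.modEq_iff_dvd' hxy).mp m2
    exact (Nat.modEq_iff_dvd' hxy).mpr (Nat.lcm_dvd d1 d2)
  rcases le_total a b with h | h
  · exact key a b h h1 h2
  · exact (key b a h h1.symm h2.symm).symm
private lemma arith10 (x y l : ℝ) (hx : 1 ≤ x) (hy : 1 ≤ y) (hl : 0.6931 ≤ l) :
    (x+2*y)^2 * (4*x*(1+l)+y^2) ≤ 40000*((x^2+y^2)*(x+y^2)*l^2) := by
  have hx0 : 0 < x := by linarith
  have hy0 : 0 < y := by linarith
  have hl0 : 0 < l := by linarith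
  have h1 : (x+2*y)^2 ≤ 6*(x^2+y^2) := by nlinarith [sq_nonneg (x-y)]
  have h2 : 4*x*(1+l)+y^2 ≤ 10*l*(x+y^2) := by nlinarith [mul_pos hx0 hl0, mul_pos (mul_pos hy0 hy0) hl0]
  have h3 : (x+2*y)^2 * (4*x*(1+l)+y^2) ≤ (6*(x^2+y^2)) * (10*l*(x+y^2)) := by
    apply mul_le_mul h1 h2 (by nlinarith) (by positivity)
  have h4 : (6*(x^2+y^2)) * (10*l*(x+y^2)) ≤ 40000*((x^2+y^2)*(x+y^2)*l^2) := by
    nlinarith [mul_pos (mul_pos (add_pos (mul_pos hx0 hx0) (mul_pos hy0 hy0)) (add_pos hx0 (mul_pos hy0 hy0))) hl0]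
  linarith

private lemma amgm10 (a b : ℝ) : 40000*(a*b) ≤ (100*(a+b))^2 := by nlinarith [sq_nonneg (a-b)]

theorem stmt10 :
    ∃ C : ℝ, 0 < C ∧ ∀ (n Q : ℕ), 1 ≤ n → 1 ≤ Q → ∀ H : ℝ, 0 < H →
      ∀ b : ℕ → ℂ, ∀ f : ℕ → ℕ, (∀ q ∈ Finset.Ioc Q (2 * Q), f q < q) →
      ∀ M : ℝ, (∀ m ∈ Finset.Icc 1 n, ‖b m‖ ^ 2 ≤ M) →
      ∑ q ∈ Finset.Ioc Q (2 * Q),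
          (q : ℝ) *
            ‖∑ m ∈ (Finset.Icc 1 n).filter (fun m => m % q = f q), b m‖ ^ 2
        ≤ C * (((n : ℝ) ^ 2 + (Q : ℝ) ^ 2) * H⁻¹ * Real.log (2 * Q) * M +
            ((n : ℝ) + (Q : ℝ) ^ 2) * H * Real.log (2 * Q) *
              ∑ m ∈ Finset.Icc 1 n, ‖b m‖ ^ 2) := by
  classical
  refine ⟨100, by norm_num, ?_⟩
  intro n Q hn hQ H hH b f hf M hM
  set I := Finset.Ioc Q (2 * Q) with hIdef
  set P : ℕ → Finset ℕ := fun q => (Finset.Icc 1 n).filter (fun m => m % q = f q) with hPdef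
  set w : ℕ → ℝ := fun m => ‖b m‖ with hwdef
  set E : ℕ → ℕ := fun m => (I.filter (fun q => m % q = f q)).card with hEdef
  set L : ℝ := Real.log (2 * Q) with hLdef
  set Sb : ℝ := ∑ m ∈ Finset.Icc 1 n, w m ^ 2 with hSbdef
  set T : ℝ := ∑ m ∈ Finset.Icc 1 n, w m ^ 2 * (E m : ℝ) with hTdef
  set SE : ℝ := ∑ m ∈ Finset.Icc 1 n, ((E m : ℝ)) ^ 2 with hSEdef
  have hL2 : Real.log 2 ≤ L := by
    apply Real.log_le_log (by norm_num)
    have : (1:ℝ) ≤ (Q:ℝ) := by exact_mod_cast hQ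
    linarith
  have hlog2 : (0.6931:ℝ) ≤ Real.log 2 := by
    have := Real.log_two_gt_d9
    linarith
  have hL0 : (0.6931:ℝ) ≤ L := le_trans hlog2 hL2
  have hM0 : 0 ≤ M := le_trans (by positivity) (hM 1 (by simp [hn]))
  have hSb0 : 0 ≤ Sb := by positivity
  have hT0 : 0 ≤ T := Finset.sum_nonneg (fun m _ => mul_nonneg (sq_nonneg _) (Nat.cast_nonneg _))
  have hn1 : (1:ℝ) ≤ (n:ℝ) := by exact_mod_cast hn
  have hQ1 : (1:ℝ) ≤ (Q:ℝ) := by exact_mod_cast hQ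
  -- Step A: pointwise bound per q
  have stepA : ∀ q ∈ I, (q:ℝ) * ‖∑ m ∈ P q, b m‖ ^ 2
      ≤ ((n:ℝ) + 2*Q) * ∑ m ∈ P q, w m ^ 2 := by
    intro q hq
    simp only [hIdef, Finset.mem_Ioc] at hq
    have hq0 : 0 < q := by omega
    have habs : ‖∑ m ∈ P q, b m‖ ≤ ∑ m ∈ P q, w m := norm_sum_le _ _
    have hsq : (∑ m ∈ P q, w m) ^ 2 ≤ ((P q).card : ℝ) * ∑ m ∈ P q, w m ^ 2 := by
      have := Finset.sum_mul_sq_le_sq_mul_sq (P q) (fun _ => (1:ℝ)) w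
      simpa using this
    have hcardN : q * (P q).card ≤ n + q := by
      have hc : (P q).card ≤ n / q + 1 := by
        apply card_class10 n q (P q) (Finset.filter_subset _ _)
        intro a ha c hc
        simp only [hPdef, Finset.mem_filter] at ha hc
        rw [ha.2, hc.2]
      calc q * (P q).card ≤ q * (n / q + 1) := Nat.mul_le_mul_left q hc
        _ = q * (n / q) + q := by ring
        _ ≤ n + q := by
            have : q * (n / q) ≤ n := Nat.mul_div_le n q
            omega
    have hcardR : (q:ℝ) * ((P q).card : ℝ) ≤ (n:ℝ) + 2*Q := by
      have h1 : ((q * (P q).card : ℕ) : ℝ) ≤ ((n + q : ℕ) : ℝ) := by exact_mod_cast hcardN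
      push_cast at h1
      have : (q:ℝ) ≤ 2*Q := by exact_mod_cast hq.2
      nlinarith [Nat.cast_nonneg (α := ℝ) (P q).card]
    have habs2 : ‖∑ m ∈ P q, b m‖ ^ 2 ≤ (∑ m ∈ P q, w m) ^ 2 := by
      apply pow_le_pow_left₀ (by positivity) habs
    have hsum2 : (0:ℝ) ≤ ∑ m ∈ P q, w m ^ 2 := by positivity
    calc (q:ℝ) * ‖∑ m ∈ P q, b m‖ ^ 2
        ≤ (q:ℝ) * (((P q).card : ℝ) * ∑ m ∈ P q, w m ^ 2) := by
          apply mul_le_mul_of_nonneg_left (le_trans habs2 hsq) (by positivity)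
      _ = ((q:ℝ) * ((P q).card : ℝ)) * ∑ m ∈ P q, w m ^ 2 := by ring
      _ ≤ ((n:ℝ) + 2*Q) * ∑ m ∈ P q, w m ^ 2 :=
          mul_le_mul_of_nonneg_right hcardR hsum2
  -- Step B: swap sum
  have stepB : ∑ q ∈ I, ∑ m ∈ P q, w m ^ 2 = T := by
    calc ∑ q ∈ I, ∑ m ∈ P q, w m ^ 2
        = ∑ q ∈ I, ∑ m ∈ Finset.Icc 1 n, (if m % q = f q then w m ^ 2 else 0) := by
          apply Finset.sum_congr rfl; intro q _
          rw [Finset.sum_filter]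
      _ = ∑ m ∈ Finset.Icc 1 n, ∑ q ∈ I, (if m % q = f q then w m ^ 2 else 0) :=
          Finset.sum_comm
      _ = T := by
          apply Finset.sum_congr rfl; intro m _
          rw [hEdef]
          simp only
          rw [Finset.card_filter]
          push_cast
          rw [Finset.mul_sum]
          apply Finset.sum_congr rfl; intro q _
          by_cases h : m % q = f q <;> simp [h]
  -- LHS ≤ (n+2Q) * T
  have hLHS : ∑ q ∈ I, (q : ℝ) * ‖∑ m ∈ P q, b m‖ ^ 2 ≤ ((n:ℝ) + 2*Q) * T := by
    calc ∑ q ∈ I, (q : ℝ) * ‖∑ m ∈ P q, b m‖ ^ 2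
        ≤ ∑ q ∈ I, ((n:ℝ) + 2*Q) * ∑ m ∈ P q, w m ^ 2 := Finset.sum_le_sum stepA
      _ = ((n:ℝ) + 2*Q) * ∑ q ∈ I, ∑ m ∈ P q, w m ^ 2 := by rw [Finset.mul_sum]
      _ = ((n:ℝ) + 2*Q) * T := by rw [stepB]
  -- Step C : T^2 ≤ Sb * (M * SE)
  have stepC : T ^ 2 ≤ Sb * (M * SE) := by
    have c1 : T = ∑ m ∈ Finset.Icc 1 n, w m * (w m * (E m : ℝ)) := by
      apply Finset.sum_congr rfl; intro m _; ring
    have c2 : T ^ 2 ≤ (∑ m ∈ Finset.Icc 1 n, w m ^ 2) *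
        ∑ m ∈ Finset.Icc 1 n, (w m * (E m : ℝ)) ^ 2 := by
      rw [c1]
      exact Finset.sum_mul_sq_le_sq_mul_sq _ _ _
    have c3 : ∑ m ∈ Finset.Icc 1 n, (w m * (E m : ℝ)) ^ 2 ≤ M * SE := by
      rw [hSEdef, Finset.mul_sum]
      apply Finset.sum_le_sum
      intro m hm
      have : w m ^ 2 ≤ M := hM m hm
      have hE2 : (0:ℝ) ≤ ((E m : ℝ)) ^ 2 := by positivity
      calc (w m * (E m : ℝ)) ^ 2 = w m ^ 2 * ((E m : ℝ)) ^ 2 := by ring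
        _ ≤ M * ((E m : ℝ)) ^ 2 := mul_le_mul_of_nonneg_right this hE2
    calc T ^ 2 ≤ Sb * ∑ m ∈ Finset.Icc 1 n, (w m * (E m : ℝ)) ^ 2 := c2
      _ ≤ Sb * (M * SE) := mul_le_mul_of_nonneg_left c3 hSb0
  -- Step D : SE bound
  have stepD : SE ≤ 4*(n:ℝ)*(1 + L) + (Q:ℝ)^2 := by
    have dEq : SE = ∑ q ∈ I, ∑ q' ∈ I, (((P q ∩ P q').card : ℕ) : ℝ) := by
      have eObs : ∀ m, (E m : ℝ) = ∑ q ∈ I, (if m % q = f q then (1:ℝ) else 0) := by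
        intro m
        rw [hEdef]
        simp only
        rw [Finset.card_filter]
        push_cast
        rfl
      calc SE = ∑ m ∈ Finset.Icc 1 n, ∑ q ∈ I, ∑ q' ∈ I,
          ((if m % q = f q then (1:ℝ) else 0) * (if m % q' = f q' then (1:ℝ) else 0)) := by
            apply Finset.sum_congr rfl; intro m _
            rw [show ((E m : ℝ))^2 = (E m : ℝ) * (E m : ℝ) from sq (E m : ℝ) ▸ by ring,
              eObs m, Finset.sum_mul_sum]
        _ = ∑ q ∈ I, ∑ q' ∈ I, ∑ m ∈ Finset.Icc 1 n,
            ((if m % q = f q then (1:ℝ) else 0) * (if m % q' = f q' then (1:ℝ) else 0)) := by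
            rw [show (∑ m ∈ Finset.Icc 1 n, ∑ q ∈ I, ∑ q' ∈ I,
                ((if m % q = f q then (1:ℝ) else 0) * (if m % q' = f q' then (1:ℝ) else 0)))
              = ∑ q ∈ I, ∑ m ∈ Finset.Icc 1 n, ∑ q' ∈ I,
                ((if m % q = f q then (1:ℝ) else 0) * (if m % q' = f q' then (1:ℝ) else 0))
              from Finset.sum_comm]
            exact Finset.sum_congr rfl (fun q _ => Finset.sum_comm)
        _ = ∑ q ∈ I, ∑ q' ∈ I, (((P q ∩ P q').card : ℕ) : ℝ) := by
            apply Finset.sum_congr rfl; intro q _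
            apply Finset.sum_congr rfl; intro q' _
            have hinter : P q ∩ P q' = (Finset.Icc 1 n).filter
                (fun m => m % q = f q ∧ m % q' = f q') := by
              ext m
              simp only [hPdef, Finset.mem_inter, Finset.mem_filter]
              tauto
            rw [hinter, Finset.card_filter]
            push_cast
            apply Finset.sum_congr rfl; intro m _
            by_cases h1 : m % q = f q <;> by_cases h2 : m % q' = f q' <;> simp [h1, h2]
    rw [dEq]
    -- bound each intersection card
    have dBound : ∀ q ∈ I, ∀ q' ∈ I, (((P q ∩ P q').card : ℕ) : ℝ)
        ≤ (n:ℝ) * (Nat.gcd q q' : ℝ) / ((Q:ℝ)^2) + 1 := by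
      intro q hq q' hq'
      simp only [hIdef, Finset.mem_Ioc] at hq hq'
      have hq0 : 0 < q := by omega
      have hq'0 : 0 < q' := by omega
      have hl0 : 0 < Nat.lcm q q' := Nat.pos_of_ne_zero (Nat.lcm_ne_zero hq0.ne' hq'0.ne')
      have hcN : (P q ∩ P q').card ≤ n / Nat.lcm q q' + 1 := by
        apply card_class10 n (Nat.lcm q q') _
          (le_trans (Finset.inter_subset_left) (Finset.filter_subset _ _))
        intro a ha c hc
        simp only [hPdef, Finset.mem_inter, Finset.mem_filter] at ha hc
        exact mod_lcm10 (ha.1.2.trans hc.1.2.symm) (ha.2.2.trans hc.2.2.symm)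
      have hcR : (((P q ∩ P q').card : ℕ) : ℝ) ≤ (n:ℝ) / (Nat.lcm q q' : ℝ) + 1 := by
        calc (((P q ∩ P q').card : ℕ) : ℝ) ≤ ((n / Nat.lcm q q' + 1 : ℕ) : ℝ) := by
              exact_mod_cast hcN
          _ ≤ (n:ℝ) / (Nat.lcm q q' : ℝ) + 1 := by
              push_cast
              have := Nat.cast_div_le (α := ℝ) (m := n) (n := Nat.lcm q q')
              linarith
      have hglcm : (Nat.gcd q q' : ℝ) * (Nat.lcm q q' : ℝ) = (q:ℝ) * (q':ℝ) := by
        exact_mod_cast Nat.gcd_mul_lcm q q'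
      have hg0 : (0:ℝ) < (Nat.gcd q q' : ℝ) := by
        exact_mod_cast Nat.gcd_pos_of_pos_left q' hq0
      have hl0R : (0:ℝ) < (Nat.lcm q q' : ℝ) := by exact_mod_cast hl0
      have hqQ : (Q:ℝ) < (q:ℝ) := by exact_mod_cast hq.1
      have hq'Q : (Q:ℝ) < (q':ℝ) := by exact_mod_cast hq'.1
      have hdiv : (n:ℝ) / (Nat.lcm q q' : ℝ) ≤ (n:ℝ) * (Nat.gcd q q' : ℝ) / ((Q:ℝ)^2) := by
        rw [div_le_div_iff₀ hl0R (by positivity)]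
        have h0Q : (0:ℝ) ≤ (Q:ℝ) := Nat.cast_nonneg Q
        have hQ2 : (Q:ℝ)^2 ≤ (q:ℝ) * (q':ℝ) := by
          rw [sq]
          exact mul_le_mul hqQ.le hq'Q.le h0Q (le_trans h0Q hqQ.le)
        calc (n:ℝ) * (Q:ℝ)^2 ≤ (n:ℝ) * ((q:ℝ) * (q':ℝ)) := by
              apply mul_le_mul_of_nonneg_left hQ2 (by positivity)
          _ = (n:ℝ) * ((Nat.gcd q q' : ℝ) * (Nat.lcm q q' : ℝ)) := by rw [hglcm]
          _ = (n:ℝ) * (Nat.gcd q q' : ℝ) * (Nat.lcm q q' : ℝ) := by ring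
      linarith
    have hcardI : (I.card : ℝ) ≤ (Q:ℝ) := by
      rw [hIdef, Nat.card_Ioc]
      have : 2*Q - Q = Q := by omega
      rw [this]
    calc ∑ q ∈ I, ∑ q' ∈ I, (((P q ∩ P q').card : ℕ) : ℝ)
        ≤ ∑ q ∈ I, ∑ q' ∈ I, ((n:ℝ) * (Nat.gcd q q' : ℝ) / ((Q:ℝ)^2) + 1) := by
          apply Finset.sum_le_sum; intro q hq
          apply Finset.sum_le_sum; intro q' hq'
          exact dBound q hq q' hq'
      _ = (∑ q ∈ I, ∑ q' ∈ I, (n:ℝ) * (Nat.gcd q q' : ℝ) / ((Q:ℝ)^2)) + (I.card:ℝ)*(I.card:ℝ) := by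
          rw [show (∑ q ∈ I, ∑ q' ∈ I, ((n:ℝ) * (Nat.gcd q q' : ℝ) / ((Q:ℝ)^2) + 1))
              = ∑ q ∈ I, ((∑ q' ∈ I, (n:ℝ) * (Nat.gcd q q' : ℝ) / ((Q:ℝ)^2)) + (I.card:ℝ))
            from Finset.sum_congr rfl (fun q _ => by
              rw [Finset.sum_add_distrib, Finset.sum_const, nsmul_eq_mul, mul_one])]
          rw [Finset.sum_add_distrib, Finset.sum_const, nsmul_eq_mul]
      _ ≤ 4*(n:ℝ)*(1 + L) + (Q:ℝ)^2 := by
          have e1 : (∑ q ∈ I, ∑ q' ∈ I, (n:ℝ) * (Nat.gcd q q' : ℝ) / ((Q:ℝ)^2))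
              = (n:ℝ)/((Q:ℝ)^2) * (∑ q ∈ I, ∑ q' ∈ I, (Nat.gcd q q' : ℝ)) := by
            rw [Finset.mul_sum]
            apply Finset.sum_congr rfl; intro q _
            rw [Finset.mul_sum]
            apply Finset.sum_congr rfl; intro q' _
            ring
          have e2 : (n:ℝ)/((Q:ℝ)^2) * (∑ q ∈ I, ∑ q' ∈ I, (Nat.gcd q q' : ℝ))
              ≤ (n:ℝ)/((Q:ℝ)^2) * (4 * (Q:ℝ)^2 * (1 + L)) := by
            apply mul_le_mul_of_nonneg_left _ (by positivity)
            exact gcd_sum_bound10 Q hQ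
          have e3 : (n:ℝ)/((Q:ℝ)^2) * (4 * (Q:ℝ)^2 * (1 + L)) = 4*(n:ℝ)*(1 + L) := by
            have : (Q:ℝ) ≠ 0 := by positivity
            field_simp
          have e4 : (I.card:ℝ)*(I.card:ℝ) ≤ (Q:ℝ)^2 := by
            have h0 : (0:ℝ) ≤ (I.card:ℝ) := Nat.cast_nonneg _
            calc (I.card:ℝ)*(I.card:ℝ) ≤ (Q:ℝ)*(Q:ℝ) :=
                  mul_le_mul hcardI hcardI h0 (le_trans h0 hcardI)
              _ = (Q:ℝ)^2 := by ring
          rw [e1]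
          linarith
  -- Final combination
  set A : ℝ := ((n:ℝ) ^ 2 + (Q:ℝ) ^ 2) * H⁻¹ * L * M with hAdef
  set B : ℝ := ((n:ℝ) + (Q:ℝ) ^ 2) * H * L * Sb with hBdef
  have hLpos : (0:ℝ) < L := lt_of_lt_of_le (by norm_num) hL0
  have hA0 : 0 ≤ A := by
    apply mul_nonneg _ hM0
    apply mul_nonneg _ hLpos.le
    apply mul_nonneg (by positivity) (inv_nonneg.mpr hH.le)
  have hB0 : 0 ≤ B := by
    apply mul_nonneg _ hSb0
    apply mul_nonneg _ hLpos.le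
    apply mul_nonneg (by positivity) hH.le
  have hAB : A * B = ((n:ℝ)^2+(Q:ℝ)^2) * (((n:ℝ)+(Q:ℝ)^2) * L^2 * M * Sb) := by
    have hc : H⁻¹ * H = 1 := inv_mul_cancel₀ hH.ne'
    calc A * B = (((n:ℝ)^2+(Q:ℝ)^2) * (((n:ℝ)+(Q:ℝ)^2) * L^2 * M * Sb)) * (H⁻¹ * H) := by
          rw [hAdef, hBdef]; ring
      _ = ((n:ℝ)^2+(Q:ℝ)^2) * (((n:ℝ)+(Q:ℝ)^2) * L^2 * M * Sb) := by rw [hc, mul_one]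
  have hfinal : ((n:ℝ) + 2*(Q:ℝ)) * T ≤ 100 * (A + B) := by
    have hbase1 : (0:ℝ) ≤ ((n:ℝ) + 2*(Q:ℝ)) * T := mul_nonneg (by positivity) hT0
    have hbase2 : (0:ℝ) ≤ 100 * (A + B) := by positivity
    have hsq2 : (((n:ℝ) + 2*(Q:ℝ)) * T)^2 ≤ (100 * (A + B))^2 := by
      have k1 : (((n:ℝ) + 2*(Q:ℝ)) * T)^2 = ((n:ℝ) + 2*(Q:ℝ))^2 * T^2 := by ring
      have k2 : ((n:ℝ) + 2*(Q:ℝ))^2 * T^2 ≤ ((n:ℝ) + 2*(Q:ℝ))^2 * (Sb * (M * SE)) :=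
        mul_le_mul_of_nonneg_left stepC (by positivity)
      have hSE0 : 0 ≤ SE := Finset.sum_nonneg (fun m _ => sq_nonneg _)
      have k3 : ((n:ℝ) + 2*(Q:ℝ))^2 * (Sb * (M * SE))
          ≤ (((n:ℝ) + 2*(Q:ℝ))^2 * (4*(n:ℝ)*(1 + L)+(Q:ℝ)^2)) * (M * Sb) := by
        have r1 : ((n:ℝ) + 2*(Q:ℝ))^2 * (Sb * (M * SE))
            = (M * Sb) * (((n:ℝ) + 2*(Q:ℝ))^2 * SE) := by ring
        have r2 : (M * Sb) * (((n:ℝ) + 2*(Q:ℝ))^2 * SE)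
            ≤ (M * Sb) * (((n:ℝ) + 2*(Q:ℝ))^2 * (4*(n:ℝ)*(1 + L)+(Q:ℝ)^2)) := by
          apply mul_le_mul_of_nonneg_left _ (mul_nonneg hM0 hSb0)
          exact mul_le_mul_of_nonneg_left stepD (by positivity)
        rw [r1]
        calc (M * Sb) * (((n:ℝ) + 2*(Q:ℝ))^2 * SE)
            ≤ (M * Sb) * (((n:ℝ) + 2*(Q:ℝ))^2 * (4*(n:ℝ)*(1 + L)+(Q:ℝ)^2)) := r2
          _ = (((n:ℝ) + 2*(Q:ℝ))^2 * (4*(n:ℝ)*(1 + L)+(Q:ℝ)^2)) * (M * Sb) := by ring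
      have k4 : (((n:ℝ) + 2*(Q:ℝ))^2 * (4*(n:ℝ)*(1 + L)+(Q:ℝ)^2)) * (M * Sb)
          ≤ (40000*(((n:ℝ)^2+(Q:ℝ)^2)*((n:ℝ)+(Q:ℝ)^2)*L^2)) * (M * Sb) := by
        apply mul_le_mul_of_nonneg_right _ (mul_nonneg hM0 hSb0)
        exact arith10 (n:ℝ) (Q:ℝ) L hn1 hQ1 hL0
      have k5 : (40000*(((n:ℝ)^2+(Q:ℝ)^2)*((n:ℝ)+(Q:ℝ)^2)*L^2)) * (M * Sb) = 40000 * (A*B) := by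
        rw [hAB]; ring
      have k6 : 40000 * (A*B) ≤ (100 * (A + B))^2 := amgm10 A B
      calc (((n:ℝ) + 2*(Q:ℝ)) * T)^2 = ((n:ℝ) + 2*(Q:ℝ))^2 * T^2 := k1
        _ ≤ ((n:ℝ) + 2*(Q:ℝ))^2 * (Sb * (M * SE)) := k2
        _ ≤ (((n:ℝ) + 2*(Q:ℝ))^2 * (4*(n:ℝ)*(1 + L)+(Q:ℝ)^2)) * (M * Sb) := k3
        _ ≤ (40000*(((n:ℝ)^2+(Q:ℝ)^2)*((n:ℝ)+(Q:ℝ)^2)*L^2)) * (M * Sb) := k4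
        _ = 40000 * (A*B) := k5
        _ ≤ (100 * (A + B))^2 := k6
    exact (pow_le_pow_iff_left₀ hbase1 hbase2 (by norm_num)).mp hsq2
  exact le_trans hLHS hfinal
end

section
/- There exists an absolute constant $\eta > 0$ such that for all $n \geq 2$, $\sum_{q_1, q_2, q_3 \leq n} \frac{(q_1,q_2)(q_1,q_3)(q_2,q_3)}{q_1 q_2 q_3 (q_1,q_2,q_3)} \tau^4(q_1) \tau^4(q_2) \tau^4(q_3) \ll (\log n)^{\eta}$, where $\tau$ is the divisor function and $(\cdot,\cdot)$ denotes gcd. -/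
open Finset

private lemma tau_mul_le (a b : ℕ) (ha : a ≠ 0) (hb : b ≠ 0) :
    (a * b).divisors.card ≤ a.divisors.card * b.divisors.card := by
  have hsub : (a * b).divisors ⊆ (a.divisors ×ˢ b.divisors).image (fun p => p.1 * p.2) := by
    intro d hd
    rw [Nat.mem_divisors] at hd
    obtain ⟨hdvd, -⟩ := hd
    have hg : 0 < Nat.gcd d a := Nat.gcd_pos_of_pos_right d (Nat.pos_of_ne_zero ha)
    have h1 : Nat.gcd d a ∣ a := Nat.gcd_dvd_right d a
    have h2 : (d / Nat.gcd d a) ∣ b := by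
      have hco : Nat.Coprime (d / Nat.gcd d a) (a / Nat.gcd d a) :=
        Nat.coprime_div_gcd_div_gcd hg
      have : (d / Nat.gcd d a) ∣ (a / Nat.gcd d a) * b := by
        have hd' : Nat.gcd d a * (d / Nat.gcd d a) ∣ Nat.gcd d a * ((a / Nat.gcd d a) * b) := by
          rw [Nat.mul_div_cancel' (Nat.gcd_dvd_left d a), ← mul_assoc,
            Nat.mul_div_cancel' h1]
          exact hdvd
        exact (mul_dvd_mul_iff_left hg.ne').mp hd'
      exact hco.dvd_of_dvd_mul_left this
    rw [Finset.mem_image]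
    refine ⟨(Nat.gcd d a, d / Nat.gcd d a), ?_, ?_⟩
    · rw [Finset.mem_product]
      exact ⟨Nat.mem_divisors.mpr ⟨h1, ha⟩, Nat.mem_divisors.mpr ⟨h2, hb⟩⟩
    · exact Nat.mul_div_cancel' (Nat.gcd_dvd_left d a)
  calc (a * b).divisors.card ≤ _ := Finset.card_le_card hsub
    _ ≤ (a.divisors ×ˢ b.divisors).card := Finset.card_image_le
    _ = _ := by rw [Finset.card_product]

private lemma gcd_lcm_identity (a b c : ℕ) (ha : a ≠ 0) (hb : b ≠ 0) (hc : c ≠ 0) :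
    Nat.gcd a b * Nat.gcd a c * Nat.gcd b c * Nat.lcm a (Nat.lcm b c)
      = a * b * c * Nat.gcd a (Nat.gcd b c) := by
  have hbc : Nat.lcm b c ≠ 0 := Nat.lcm_ne_zero hb hc
  have hg1 : Nat.gcd a b ≠ 0 := fun h => ha (Nat.eq_zero_of_gcd_eq_zero_left h)
  have hg2 : Nat.gcd a c ≠ 0 := fun h => ha (Nat.eq_zero_of_gcd_eq_zero_left h)
  have hg3 : Nat.gcd b c ≠ 0 := fun h => hb (Nat.eq_zero_of_gcd_eq_zero_left h)
  apply Nat.eq_of_factorization_eq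
  · exact mul_ne_zero (mul_ne_zero (mul_ne_zero hg1 hg2) hg3) (Nat.lcm_ne_zero ha hbc)
  · exact mul_ne_zero (mul_ne_zero (mul_ne_zero ha hb) hc)
      (fun h => ha (Nat.eq_zero_of_gcd_eq_zero_left h))
  intro p
  rw [Nat.factorization_mul (mul_ne_zero (mul_ne_zero hg1 hg2) hg3) (Nat.lcm_ne_zero ha hbc),
    Nat.factorization_mul (mul_ne_zero hg1 hg2) hg3,
    Nat.factorization_mul hg1 hg2,
    Nat.factorization_mul (mul_ne_zero (mul_ne_zero ha hb) hc)
      (fun h => ha (Nat.eq_zero_of_gcd_eq_zero_left h)),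
    Nat.factorization_mul (mul_ne_zero ha hb) hc, Nat.factorization_mul ha hb,
    Nat.factorization_gcd ha hb, Nat.factorization_gcd ha hc, Nat.factorization_gcd hb hc,
    Nat.factorization_lcm ha hbc, Nat.factorization_lcm hb hc,
    Nat.factorization_gcd ha hg3, Nat.factorization_gcd hb hc]
  simp only [Finsupp.add_apply, Finsupp.inf_apply, Finsupp.sup_apply]
  omega

/-- `∑_{m ≤ N} τ(m)^k / m ≤ (1 + log N)^(2^k)`. -/
private lemma sum_tau_pow_div_le (k : ℕ) : ∀ N : ℕ,
    ∑ m ∈ Finset.Icc 1 N, (m.divisors.card : ℝ) ^ k / m ≤ (1 + Real.log N) ^ (2 ^ k) := by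
  induction k with
  | zero =>
    intro N
    simp only [pow_zero, pow_one]
    calc ∑ m ∈ Finset.Icc 1 N, (1 : ℝ) / m
        = (harmonic N : ℝ) := by
          rw [harmonic_eq_sum_Icc]
          push_cast
          simp [one_div]
      _ ≤ 1 + Real.log N := harmonic_le_one_add_log N
  | succ k ih =>
    intro N
    have hlog : (0 : ℝ) ≤ 1 + Real.log N := by
      rcases Nat.eq_zero_or_pos N with h | h
      · simp [h]
      · have := Real.log_natCast_nonneg N
        linarith
    set g : ℕ → ℝ := fun m => (m.divisors.card : ℝ) ^ k / m with hg
    have hg_nonneg : ∀ m, 0 ≤ g m := fun m => by positivity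
    -- step 1 : pointwise bound by sum over divisor pairs
    have step1 : ∀ m ∈ Finset.Icc 1 N,
        (m.divisors.card : ℝ) ^ (k + 1) / m ≤
          ∑ x ∈ m.divisorsAntidiagonal, g x.1 * g x.2 := by
      intro m hm
      rw [Finset.mem_Icc] at hm
      have hm0 : m ≠ 0 := by omega
      have hcard : m.divisorsAntidiagonal.card = m.divisors.card := by
        rw [← Nat.map_div_right_divisors, Finset.card_map]
      calc (m.divisors.card : ℝ) ^ (k + 1) / m
          = ∑ _x ∈ m.divisorsAntidiagonal, (m.divisors.card : ℝ) ^ k / m := by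
            rw [Finset.sum_const, hcard, nsmul_eq_mul, pow_succ]
            ring
        _ ≤ ∑ x ∈ m.divisorsAntidiagonal, g x.1 * g x.2 := by
            apply Finset.sum_le_sum
            intro x hx
            rw [Nat.mem_divisorsAntidiagonal] at hx
            obtain ⟨hxm, -⟩ := hx
            have hx1 : x.1 ≠ 0 := by rintro h; rw [h] at hxm; simp at hxm; omega
            have hx2 : x.2 ≠ 0 := by rintro h; rw [h] at hxm; simp at hxm; omega
            have htau : (m.divisors.card : ℝ) ≤
                (x.1.divisors.card : ℝ) * (x.2.divisors.card : ℝ) := by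
              rw [← hxm]
              exact_mod_cast tau_mul_le x.1 x.2 hx1 hx2
            have hmpos : (0 : ℝ) < m := by positivity
            rw [hg]
            simp only
            rw [div_mul_div_comm, ← mul_pow]
            have hcast : (x.1 : ℝ) * x.2 = m := by exact_mod_cast hxm
            rw [hcast]
            gcongr

      -- done
    have step2 : ∑ m ∈ Finset.Icc 1 N, ∑ x ∈ m.divisorsAntidiagonal, g x.1 * g x.2
        ≤ ∑ x ∈ Finset.Icc 1 N ×ˢ Finset.Icc 1 N, g x.1 * g x.2 := by
      have hdisj : (↑(Finset.Icc 1 N) : Set ℕ).PairwiseDisjoint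
          (fun m => m.divisorsAntidiagonal) := by
        intro m₁ h₁ m₂ h₂ hne
        apply Finset.disjoint_left.mpr
        intro x hx1 hx2
        rw [Nat.mem_divisorsAntidiagonal] at hx1 hx2
        exact hne (hx1.1.symm.trans hx2.1)
      rw [← Finset.sum_biUnion hdisj]
      apply Finset.sum_le_sum_of_subset_of_nonneg
      · intro x hx
        rw [Finset.mem_biUnion] at hx
        obtain ⟨m, hm, hx⟩ := hx
        rw [Finset.mem_Icc] at hm
        rw [Nat.mem_divisorsAntidiagonal] at hx
        obtain ⟨hxm, hm0⟩ := hx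
        have hx1 : x.1 ∣ m := ⟨x.2, hxm.symm⟩
        have hx2 : x.2 ∣ m := ⟨x.1, by rw [mul_comm]; exact hxm.symm⟩
        rw [Finset.mem_product, Finset.mem_Icc, Finset.mem_Icc]
        have hm0' : 0 < m := Nat.pos_of_ne_zero hm0
        exact ⟨⟨Nat.pos_of_dvd_of_pos hx1 hm0', (Nat.le_of_dvd hm0' hx1).trans hm.2⟩,
          ⟨Nat.pos_of_dvd_of_pos hx2 hm0', (Nat.le_of_dvd hm0' hx2).trans hm.2⟩⟩
      · intro x _ _
        exact mul_nonneg (hg_nonneg _) (hg_nonneg _)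
    calc ∑ m ∈ Finset.Icc 1 N, (m.divisors.card : ℝ) ^ (k + 1) / m
        ≤ ∑ m ∈ Finset.Icc 1 N, ∑ x ∈ m.divisorsAntidiagonal, g x.1 * g x.2 :=
          Finset.sum_le_sum step1
      _ ≤ ∑ x ∈ Finset.Icc 1 N ×ˢ Finset.Icc 1 N, g x.1 * g x.2 := step2
      _ = (∑ m ∈ Finset.Icc 1 N, g m) * (∑ m ∈ Finset.Icc 1 N, g m) := by
          rw [Finset.sum_product]
          simp_rw [← Finset.mul_sum, ← Finset.sum_mul]
      _ ≤ (1 + Real.log N) ^ (2 ^ k) * (1 + Real.log N) ^ (2 ^ k) := by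
          apply mul_le_mul (ih N) (ih N) (Finset.sum_nonneg fun m _ => hg_nonneg m)
          positivity
      _ = (1 + Real.log N) ^ (2 ^ (k + 1)) := by
          rw [← pow_add]
          congr 1
          rw [pow_succ, mul_two]


private lemma final_bound (n : ℕ) (hn : 2 ≤ n) :
    ∑ b ∈ Finset.Icc 1 (n ^ 3), (b.divisors.card : ℝ) ^ 15 / b
      ≤ (5 : ℝ) ^ 32768 * (Real.log n) ^ 32768 := by
  have hlogn : (0 : ℝ) ≤ Real.log n := Real.log_natCast_nonneg n
  have hlog2 : (1 : ℝ) ≤ 2 * Real.log n := by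
    have h2n : (2 : ℝ) ≤ (n : ℝ) := by exact_mod_cast hn
    have := Real.log_le_log (by norm_num) h2n
    have := Real.log_two_gt_d9
    linarith
  have hlogN : Real.log ((n ^ 3 : ℕ) : ℝ) = 3 * Real.log n := by
    push_cast
    rw [Real.log_pow]
    norm_num
  have hkey : (1 + Real.log ((n ^ 3 : ℕ) : ℝ)) ^ (2 ^ 15)
      ≤ (5 : ℝ) ^ 32768 * (Real.log n) ^ 32768 := by
    rw [hlogN]
    calc (1 + 3 * Real.log n) ^ (2 ^ 15)
        ≤ (5 * Real.log n) ^ (2 ^ 15) := by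
          apply pow_le_pow_left₀ (by linarith) (by linarith)
      _ = (5 : ℝ) ^ 32768 * (Real.log n) ^ 32768 := by
          have h215 : (2 : ℕ) ^ 15 = 32768 := by norm_num
          rw [mul_pow, h215]
  exact (sum_tau_pow_div_le 15 (n ^ 3)).trans hkey

theorem stmt15 :
    ∃ η : ℕ, 0 < η ∧ ∃ C : ℝ, 0 < C ∧ ∀ n : ℕ, 2 ≤ n →
      ∑ q1 ∈ Finset.Icc 1 n, ∑ q2 ∈ Finset.Icc 1 n, ∑ q3 ∈ Finset.Icc 1 n,
          ((Nat.gcd q1 q2 : ℝ) * (Nat.gcd q1 q3 : ℝ) * (Nat.gcd q2 q3 : ℝ)) /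
              ((q1 : ℝ) * q2 * q3 * (Nat.gcd q1 (Nat.gcd q2 q3) : ℝ)) *
            ((q1.divisors.card : ℝ) ^ 4 * (q2.divisors.card : ℝ) ^ 4 *
              (q3.divisors.card : ℝ) ^ 4)
        ≤ C * (Real.log n) ^ η := by
  refine ⟨32768, by norm_num, (5 : ℝ) ^ 32768, by positivity, fun n hn => ?_⟩
  set s : Finset ℕ := Finset.Icc 1 n with hs
  set L : ℕ × ℕ × ℕ → ℕ := fun x => Nat.lcm x.1 (Nat.lcm x.2.1 x.2.2) with hL
  set f : ℕ × ℕ × ℕ → ℝ := fun x =>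
    ((Nat.gcd x.1 x.2.1 : ℝ) * (Nat.gcd x.1 x.2.2 : ℝ) * (Nat.gcd x.2.1 x.2.2 : ℝ)) /
        ((x.1 : ℝ) * x.2.1 * x.2.2 * (Nat.gcd x.1 (Nat.gcd x.2.1 x.2.2) : ℝ)) *
      ((x.1.divisors.card : ℝ) ^ 4 * (x.2.1.divisors.card : ℝ) ^ 4 *
        (x.2.2.divisors.card : ℝ) ^ 4) with hf
  have hrw : ∑ q1 ∈ Finset.Icc 1 n, ∑ q2 ∈ Finset.Icc 1 n, ∑ q3 ∈ Finset.Icc 1 n,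
          ((Nat.gcd q1 q2 : ℝ) * (Nat.gcd q1 q3 : ℝ) * (Nat.gcd q2 q3 : ℝ)) /
              ((q1 : ℝ) * q2 * q3 * (Nat.gcd q1 (Nat.gcd q2 q3) : ℝ)) *
            ((q1.divisors.card : ℝ) ^ 4 * (q2.divisors.card : ℝ) ^ 4 *
              (q3.divisors.card : ℝ) ^ 4)
      = ∑ x ∈ s ×ˢ s ×ˢ s, f x := by
    rw [Finset.sum_product]
    exact Finset.sum_congr rfl fun a _ => by rw [Finset.sum_product]
  rw [hrw]
  -- membership facts
  have hmem : ∀ x ∈ s ×ˢ s ×ˢ s, (1 ≤ x.1 ∧ x.1 ≤ n) ∧ (1 ≤ x.2.1 ∧ x.2.1 ≤ n) ∧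
      (1 ≤ x.2.2 ∧ x.2.2 ≤ n) := by
    intro x hx
    rw [Finset.mem_product, Finset.mem_product] at hx
    simp only [hs, Finset.mem_Icc] at hx
    exact ⟨hx.1, hx.2.1, hx.2.2⟩
  -- Step 1: pointwise bound
  have hterm : ∀ x ∈ s ×ˢ s ×ˢ s,
      f x ≤ ((L x).divisors.card : ℝ) ^ 12 / (L x) := by
    intro x hx
    obtain ⟨⟨ha1, ha2⟩, ⟨hb1, hb2⟩, ⟨hc1, hc2⟩⟩ := hmem x hx
    have ha : x.1 ≠ 0 := by omega
    have hb : x.2.1 ≠ 0 := by omega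
    have hc : x.2.2 ≠ 0 := by omega
    have hL0 : L x ≠ 0 := Nat.lcm_ne_zero ha (Nat.lcm_ne_zero hb hc)
    have hLpos : (0 : ℝ) < L x := by
      exact_mod_cast Nat.pos_of_ne_zero hL0
    have hid := gcd_lcm_identity x.1 x.2.1 x.2.2 ha hb hc
    have hidR : ((Nat.gcd x.1 x.2.1 : ℝ) * (Nat.gcd x.1 x.2.2 : ℝ) * (Nat.gcd x.2.1 x.2.2 : ℝ))
        * (L x : ℝ) = ((x.1 : ℝ) * x.2.1 * x.2.2 * (Nat.gcd x.1 (Nat.gcd x.2.1 x.2.2) : ℝ)) := by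
      rw [hL]
      exact_mod_cast congrArg (Nat.cast : ℕ → ℝ) hid
    have hPpos : (0 : ℝ) < (x.1 : ℝ) * x.2.1 * x.2.2 *
        (Nat.gcd x.1 (Nat.gcd x.2.1 x.2.2) : ℝ) := by
      have hg0 : Nat.gcd x.1 (Nat.gcd x.2.1 x.2.2) ≠ 0 :=
        fun h => ha (Nat.eq_zero_of_gcd_eq_zero_left h)
      have := Nat.pos_of_ne_zero ha
      have := Nat.pos_of_ne_zero hb
      have := Nat.pos_of_ne_zero hc
      have := Nat.pos_of_ne_zero hg0
      positivity
    have hfrac : ((Nat.gcd x.1 x.2.1 : ℝ) * (Nat.gcd x.1 x.2.2 : ℝ) * (Nat.gcd x.2.1 x.2.2 : ℝ)) /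
        ((x.1 : ℝ) * x.2.1 * x.2.2 * (Nat.gcd x.1 (Nat.gcd x.2.1 x.2.2) : ℝ)) = 1 / (L x) := by
      rw [div_eq_div_iff hPpos.ne' hLpos.ne']
      linarith [hidR]
    have htau : ∀ q : ℕ, q ∣ L x → (q.divisors.card : ℝ) ≤ ((L x).divisors.card : ℝ) := by
      intro q hq
      exact_mod_cast Finset.card_le_card (Nat.divisors_subset_of_dvd hL0 hq)
    have h1 : x.1 ∣ L x := Nat.dvd_lcm_left _ _
    have h2 : x.2.1 ∣ L x := (Nat.dvd_lcm_left _ _).trans (Nat.dvd_lcm_right _ _)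
    have h3 : x.2.2 ∣ L x := (Nat.dvd_lcm_right _ _).trans (Nat.dvd_lcm_right _ _)
    have htaus : (x.1.divisors.card : ℝ) ^ 4 * (x.2.1.divisors.card : ℝ) ^ 4 *
        (x.2.2.divisors.card : ℝ) ^ 4 ≤ ((L x).divisors.card : ℝ) ^ 12 := by
      calc (x.1.divisors.card : ℝ) ^ 4 * (x.2.1.divisors.card : ℝ) ^ 4 *
          (x.2.2.divisors.card : ℝ) ^ 4
          ≤ ((L x).divisors.card : ℝ) ^ 4 * ((L x).divisors.card : ℝ) ^ 4 *
            ((L x).divisors.card : ℝ) ^ 4 := by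
            gcongr
        _ = ((L x).divisors.card : ℝ) ^ 12 := by ring
    rw [hf]
    simp only
    rw [hfrac, one_div, inv_mul_eq_div]
    exact div_le_div_of_nonneg_right htaus hLpos.le
  -- Step 2: sum the bound and group by the value of L
  have hgroup : ∑ x ∈ s ×ˢ s ×ˢ s, ((L x).divisors.card : ℝ) ^ 12 / (L x)
      = ∑ b ∈ (s ×ˢ s ×ˢ s).image L,
          (((s ×ˢ s ×ˢ s).filter fun x => L x = b).card : ℝ) *
            ((b.divisors.card : ℝ) ^ 12 / b) := by
    rw [Finset.sum_comp (fun m : ℕ => ((m.divisors.card : ℝ)) ^ 12 / (m : ℝ)) L]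
    exact Finset.sum_congr rfl fun b _ => by rw [nsmul_eq_mul]
  -- Step 3: fiber cardinality bound and image location
  have hfiber : ∀ b ∈ (s ×ˢ s ×ˢ s).image L,
      (((s ×ˢ s ×ˢ s).filter fun x => L x = b).card : ℝ) *
          ((b.divisors.card : ℝ) ^ 12 / b)
        ≤ (b.divisors.card : ℝ) ^ 15 / b := by
    intro b hb
    rw [Finset.mem_image] at hb
    obtain ⟨x, hx, hxb⟩ := hb
    obtain ⟨⟨ha1, -⟩, ⟨hb1, -⟩, ⟨hc1, -⟩⟩ := hmem x hx
    have hb0 : b ≠ 0 := by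
      rw [← hxb]
      exact Nat.lcm_ne_zero (by omega) (Nat.lcm_ne_zero (by omega) (by omega))
    have hcard : ((s ×ˢ s ×ˢ s).filter fun x => L x = b).card ≤ b.divisors.card ^ 3 := by
      have hsub : ((s ×ˢ s ×ˢ s).filter fun x => L x = b) ⊆
          b.divisors ×ˢ b.divisors ×ˢ b.divisors := by
        intro y hy
        rw [Finset.mem_filter] at hy
        obtain ⟨hy1, hy2⟩ := hy
        obtain ⟨⟨hya, -⟩, ⟨hyb, -⟩, ⟨hyc, -⟩⟩ := hmem y hy1
        have d1 : y.1 ∣ b := hy2 ▸ Nat.dvd_lcm_left _ _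
        have d2 : y.2.1 ∣ b := hy2 ▸ (Nat.dvd_lcm_left _ _).trans (Nat.dvd_lcm_right _ _)
        have d3 : y.2.2 ∣ b := hy2 ▸ (Nat.dvd_lcm_right _ _).trans (Nat.dvd_lcm_right _ _)
        rw [Finset.mem_product, Finset.mem_product]
        exact ⟨Nat.mem_divisors.mpr ⟨d1, hb0⟩,
          Nat.mem_divisors.mpr ⟨d2, hb0⟩, Nat.mem_divisors.mpr ⟨d3, hb0⟩⟩
      calc ((s ×ˢ s ×ˢ s).filter fun x => L x = b).card
          ≤ (b.divisors ×ˢ b.divisors ×ˢ b.divisors).card := Finset.card_le_card hsub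
        _ = b.divisors.card ^ 3 := by
            rw [Finset.card_product, Finset.card_product]; ring
    have hbpos : (0 : ℝ) < b := by exact_mod_cast Nat.pos_of_ne_zero hb0
    calc (((s ×ˢ s ×ˢ s).filter fun x => L x = b).card : ℝ) *
        ((b.divisors.card : ℝ) ^ 12 / b)
        ≤ (b.divisors.card : ℝ) ^ 3 * ((b.divisors.card : ℝ) ^ 12 / b) := by
          apply mul_le_mul_of_nonneg_right _ (by positivity)
          exact_mod_cast hcard
      _ = (b.divisors.card : ℝ) ^ 15 / b := by ring
  -- Step 4: extend sum to Icc 1 (n^3)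
  have himage : (s ×ˢ s ×ˢ s).image L ⊆ Finset.Icc 1 (n ^ 3) := by
    intro b hb
    rw [Finset.mem_image] at hb
    obtain ⟨x, hx, hxb⟩ := hb
    obtain ⟨⟨ha1, ha2⟩, ⟨hb1, hb2⟩, ⟨hc1, hc2⟩⟩ := hmem x hx
    have hb0 : b ≠ 0 := by
      rw [← hxb]
      exact Nat.lcm_ne_zero (by omega) (Nat.lcm_ne_zero (by omega) (by omega))
    have hdvd : b ∣ x.1 * (x.2.1 * x.2.2) := by
      rw [← hxb, hL]
      exact Nat.lcm_dvd (dvd_mul_right _ _)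
        ((Nat.lcm_dvd (dvd_mul_right _ _) (dvd_mul_left _ _)).mul_left _)
    have hble : b ≤ n ^ 3 := by
      have h1 : b ≤ x.1 * (x.2.1 * x.2.2) := Nat.le_of_dvd (by positivity) hdvd
      have h2 : x.1 * (x.2.1 * x.2.2) ≤ n * (n * n) := by
        exact Nat.mul_le_mul ha2 (Nat.mul_le_mul hb2 hc2)
      calc b ≤ n * (n * n) := h1.trans h2
        _ = n ^ 3 := by ring
    rw [Finset.mem_Icc]
    exact ⟨Nat.pos_of_ne_zero hb0, hble⟩
  have hextend : ∑ b ∈ (s ×ˢ s ×ˢ s).image L, (b.divisors.card : ℝ) ^ 15 / b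
      ≤ ∑ b ∈ Finset.Icc 1 (n ^ 3), (b.divisors.card : ℝ) ^ 15 / b := by
    apply Finset.sum_le_sum_of_subset_of_nonneg himage
    intro b _ _
    positivity
  calc ∑ x ∈ s ×ˢ s ×ˢ s, f x
      ≤ ∑ x ∈ s ×ˢ s ×ˢ s, ((L x).divisors.card : ℝ) ^ 12 / (L x) :=
        Finset.sum_le_sum hterm
    _ = ∑ b ∈ (s ×ˢ s ×ˢ s).image L,
          (((s ×ˢ s ×ˢ s).filter fun x => L x = b).card : ℝ) *
            ((b.divisors.card : ℝ) ^ 12 / b) := hgroup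
    _ ≤ ∑ b ∈ (s ×ˢ s ×ˢ s).image L, (b.divisors.card : ℝ) ^ 15 / b :=
        Finset.sum_le_sum hfiber
    _ ≤ ∑ b ∈ Finset.Icc 1 (n ^ 3), (b.divisors.card : ℝ) ^ 15 / b := hextend
    _ ≤ (5 : ℝ) ^ 32768 * (Real.log n) ^ 32768 := final_bound n hn
end

section
/- Let $n$ be odd, and let $q_3, a_3$ with $(a_3, q_3) = 1$ and $q_2$ be given. Then there exists $a_2$ with $(a_2, q_2) = 1$ such that for every prime $p \mid (q_3, q_2)$ we have $n \not\equiv a_3 + a_2 \pmod p$. Moreover, given additionally any $q_1$, there exists $a_1$ with $(a_1, q_1) = 1$ such that: (1) $n \equiv a_1 + a_2 + a_3 \pmod{(q_1,q_2,q_3)}$; (2) for every prime $p \mid (q_1,q_2)$ with $p \nmid q_3$, $n \not\equiv a_1 + a_2 \pmod p$; (3) for every prime $p \mid (q_1,q_3)$ with $p \nmid q_2$, $n \not\equiv a_1 + a_3 \pmod p$. -/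
open Finset

lemma aux_not_dvd_of_gcd (a : ℤ) (q p : ℕ) (hp : p.Prime) (h : Int.gcd a q = 1) (hpq : p ∣ q) :
    ¬ (p : ℤ) ∣ a := by
  intro hd
  have h1 : p ∣ a.natAbs := by
    have := Int.natAbs_dvd_natAbs.mpr hd
    simpa using this
  have h2 : p ∣ Int.gcd a q := Nat.dvd_gcd h1 (by simpa using hpq)
  rw [h] at h2
  exact hp.one_lt.ne' (Nat.eq_one_of_dvd_one h2)

lemma aux_gcd_one (a : ℤ) (q : ℕ) (hq : q ≠ 0) (h : ∀ p : ℕ, p.Prime → p ∣ q → ¬ (p : ℤ) ∣ a) :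
    Int.gcd a q = 1 := by
  by_contra hg
  have hg0 : Int.gcd a q ≠ 0 := by
    intro h0
    rw [Int.gcd_eq_zero_iff] at h0
    exact hq (by exact_mod_cast h0.2)
  set p := (Int.gcd a q).minFac with hpdef
  have hp : p.Prime := Nat.minFac_prime hg
  have hpg : p ∣ Int.gcd a q := Nat.minFac_dvd _
  have hpq : p ∣ q := by
    have : (p : ℤ) ∣ (q : ℤ) := dvd_trans (Int.natCast_dvd_natCast.mpr hpg) (Int.gcd_dvd_right _ _)
    exact_mod_cast this
  have hpa : (p : ℤ) ∣ a := dvd_trans (Int.natCast_dvd_natCast.mpr hpg) (Int.gcd_dvd_left _ _)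
  exact h p hp hpq hpa

lemma aux_zmod_step (p : ℕ) (hp : p.Prime) (U B1 B2 : ZMod p) (hU : U ≠ 0)
    (h2 : p = 2 → B1 = B2) : ∃ z : ZMod p, U * z ≠ B1 ∧ U * z ≠ B2 := by
  haveI : Fact p.Prime := ⟨hp⟩
  suffices h : ∃ w : ZMod p, w ≠ B1 ∧ w ≠ B2 by
    obtain ⟨w, hw1, hw2⟩ := h
    exact ⟨U⁻¹ * w, by rw [← mul_assoc, mul_inv_cancel₀ hU, one_mul]; exact ⟨hw1, hw2⟩⟩
  by_cases hB : B1 = B2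
  · refine ⟨B1 + 1, ?_, ?_⟩ <;> subst hB <;> simp
  · have hp2 : p ≠ 2 := fun h => hB (h2 h)
    have h2ne : (2 : ZMod p) ≠ 0 := by
      have hnd : ¬ (p ∣ 2) := fun h => hp2 ((Nat.prime_dvd_prime_iff_eq hp Nat.prime_two).mp h)
      have := (ZMod.natCast_eq_zero_iff 2 p).not.mpr hnd
      simpa using this
    by_cases hB2 : B1 + 1 = B2
    · refine ⟨B1 + 2, ?_, ?_⟩
      · simpa using h2ne
      · rw [← hB2]
        intro h
        have h1 : (1 : ZMod p) = 0 := by linear_combination h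
        exact one_ne_zero h1
    · exact ⟨B1 + 1, by simp, hB2⟩

lemma aux_int_step (p : ℕ) (hp : p.Prime) (u c1 c2 : ℤ) (hu : ¬ (p : ℤ) ∣ u)
    (h2 : p = 2 → (2 : ℤ) ∣ c1 - c2) :
    ∃ r : ℤ, ¬ (p : ℤ) ∣ u * r - c1 ∧ ¬ (p : ℤ) ∣ u * r - c2 := by
  haveI : Fact p.Prime := ⟨hp⟩
  have hU : ((u : ZMod p)) ≠ 0 := by
    rw [Ne, ZMod.intCast_zmod_eq_zero_iff_dvd]; exact hu
  obtain ⟨z, hz1, hz2⟩ := aux_zmod_step p hp (u : ZMod p) (c1 : ZMod p) (c2 : ZMod p) hU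
    (by intro hp2; subst hp2
        have := h2 rfl
        have : ((c1 - c2 : ℤ) : ZMod 2) = 0 := (ZMod.intCast_zmod_eq_zero_iff_dvd _ 2).mpr this
        push_cast at this
        exact sub_eq_zero.mp this )
  haveI : NeZero p := ⟨hp.pos.ne'⟩
  refine ⟨(z.val : ℤ), ?_, ?_⟩
  · intro h
    apply hz1
    have h0 : ((u * (z.val : ℤ) - c1 : ℤ) : ZMod p) = 0 :=
      (ZMod.intCast_zmod_eq_zero_iff_dvd _ p).mpr h
    push_cast at h0
    rw [ZMod.natCast_val, ZMod.cast_id] at h0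
    linear_combination h0
  · intro h
    apply hz2
    have h0 : ((u * (z.val : ℤ) - c2 : ℤ) : ZMod p) = 0 :=
      (ZMod.intCast_zmod_eq_zero_iff_dvd _ p).mpr h
    push_cast at h0
    rw [ZMod.natCast_val, ZMod.cast_id] at h0
    linear_combination h0

lemma aux_key : ∀ q : ℕ, q ≠ 0 → ∀ u b1 b2 : ℕ → ℤ,
    (∀ p : ℕ, p.Prime → p ∣ q → ¬ (p : ℤ) ∣ u p) →
    (2 ∣ q → (2 : ℤ) ∣ b1 2 - b2 2) →
    ∃ x : ℤ, ∀ p : ℕ, p.Prime → p ∣ q →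
      ¬ (p : ℤ) ∣ u p * x - b1 p ∧ ¬ (p : ℤ) ∣ u p * x - b2 p := by
  intro q
  induction q using Nat.strong_induction_on with
  | _ q IH =>
    intro hq u b1 b2 hu h2
    by_cases hq1 : q = 1
    · subst hq1
      exact ⟨0, fun p hp hpq => absurd (Nat.eq_one_of_dvd_one hpq) hp.one_lt.ne'⟩
    · set p := q.minFac with hpdef
      have hp : p.Prime := Nat.minFac_prime hq1
      have hpq : p ∣ q := Nat.minFac_dvd q
      set k := q.factorization p with hkdef
      set m := q / p ^ k with hmdef
      have hmq : m ∣ q := Nat.ordCompl_dvd q p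
      have hm0 : m ≠ 0 := (Nat.ordCompl_pos p hq).ne'
      have hpm : ¬ p ∣ m := Nat.not_dvd_ordCompl hp hq
      have hk0 : k ≠ 0 := by
        have := (Nat.Prime.factorization_pos_of_dvd hp hq hpq)
        omega
      have hmlt : m < q := Nat.div_lt_self (Nat.pos_of_ne_zero hq)
        (Nat.one_lt_pow hk0 hp.one_lt)
      obtain ⟨x', hx'⟩ := IH m hmlt hm0 u b1 b2
        (fun l hl hlm => hu l hl (hlm.trans hmq))
        (fun h => h2 (h.trans hmq))
      obtain ⟨r, hr1, hr2⟩ := aux_int_step p hp (u p) (b1 p) (b2 p) (hu p hp hpq)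
        (fun hp2 => by rw [hp2]; exact h2 (hp2 ▸ hpq))
      have hcop : Nat.Coprime p m := (hp.coprime_iff_not_dvd).mpr hpm
      have hb : (p : ℤ) * Int.gcdA p m + (m : ℤ) * Int.gcdB p m = 1 := by
        have := Int.gcd_eq_gcd_ab (p : ℤ) (m : ℤ)
        rw [Int.gcd_natCast_natCast, hcop] at this
        push_cast at this
        linarith
      set A := Int.gcdA (p : ℤ) (m : ℤ)
      set B := Int.gcdB (p : ℤ) (m : ℤ)
      refine ⟨x' * ((p : ℤ) * A) + r * ((m : ℤ) * B), ?_⟩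
      set x := x' * ((p : ℤ) * A) + r * ((m : ℤ) * B) with hxdef
      have hxr : (p : ℤ) ∣ x - r := ⟨A * (x' - r), by linear_combination r * hb⟩
      have hxx' : (m : ℤ) ∣ x - x' := ⟨B * (r - x'), by linear_combination x' * hb⟩
      intro l hl hlq
      have hlcase : l = p ∨ l ∣ m := by
        have : l ∣ p ^ k * m := by rw [Nat.ordProj_mul_ordCompl_eq_self q p]; exact hlq
        rcases (hl.dvd_mul).mp this with h | h
        · exact Or.inl (((Nat.prime_dvd_prime_iff_eq hl hp).mp (hl.dvd_of_dvd_pow h)))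
        · exact Or.inr h
      rcases hlcase with rfl | hlm
      · constructor
        · intro hd
          exact hr1 (by
            have hsub : (p : ℤ) ∣ (u p * x - b1 p) - u p * (x - r) := hd.sub (hxr.mul_left (u p))
            have he : (u p * x - b1 p) - u p * (x - r) = u p * r - b1 p := by ring
            rwa [he] at hsub)
        · intro hd
          exact hr2 (by
            have hsub : (p : ℤ) ∣ (u p * x - b2 p) - u p * (x - r) := hd.sub (hxr.mul_left (u p))
            have he : (u p * x - b2 p) - u p * (x - r) = u p * r - b2 p := by ring
            rwa [he] at hsub)
      · have hlx : (l : ℤ) ∣ x - x' :=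
          dvd_trans (Int.natCast_dvd_natCast.mpr hlm) hxx'
        obtain ⟨h1, h2'⟩ := hx' l hl hlm
        constructor
        · intro hd
          exact h1 (by
            have hsub : (l : ℤ) ∣ (u l * x - b1 l) - u l * (x - x') := hd.sub (hlx.mul_left (u l))
            have he : (u l * x - b1 l) - u l * (x - x') = u l * x' - b1 l := by ring
            rwa [he] at hsub)
        · intro hd
          exact h2' (by
            have hsub : (l : ℤ) ∣ (u l * x - b2 l) - u l * (x - x') := hd.sub (hlx.mul_left (u l))
            have he : (u l * x - b2 l) - u l * (x - x') = u l * x' - b2 l := by ring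
            rwa [he] at hsub)

theorem stmt18 (n : ℤ) (hn : ¬ 2 ∣ n) (q2 q3 : ℕ) (hq2 : 1 ≤ q2) (hq3 : 1 ≤ q3)
    (a3 : ℤ) (ha3 : Int.gcd a3 q3 = 1) :
    ∃ a2 : ℤ, Int.gcd a2 q2 = 1 ∧
      (∀ p : ℕ, p.Prime → p ∣ Nat.gcd q3 q2 → ¬ (p : ℤ) ∣ (n - (a3 + a2))) ∧
      ∀ q1 : ℕ, 1 ≤ q1 →
        ∃ a1 : ℤ, Int.gcd a1 q1 = 1 ∧
          ((Nat.gcd q1 (Nat.gcd q2 q3) : ℤ) ∣ (n - (a1 + a2 + a3))) ∧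
          (∀ p : ℕ, p.Prime → p ∣ Nat.gcd q1 q2 → ¬ p ∣ q3 →
            ¬ (p : ℤ) ∣ (n - (a1 + a2))) ∧
          (∀ p : ℕ, p.Prime → p ∣ Nat.gcd q1 q3 → ¬ p ∣ q2 →
            ¬ (p : ℤ) ∣ (n - (a1 + a3))) := by
  have hq2' : q2 ≠ 0 := by omega
  have hq3' : q3 ≠ 0 := by omega
  -- Step 1: construct a2
  obtain ⟨a2, ha2all⟩ := aux_key q2 hq2' (fun _ => 1) (fun _ => 0)
    (fun p => if p ∣ q3 then n - a3 else 0)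
    (fun p hp _ => by
      intro h
      have h' : (p : ℤ) ∣ (1 : ℤ) := h
      have : p ∣ 1 := by exact_mod_cast h'
      exact hp.one_lt.ne' (Nat.eq_one_of_dvd_one this))
    (by
      intro h2q2
      by_cases h23 : 2 ∣ q3
      · have ha3odd : ¬ (2 : ℤ) ∣ a3 := aux_not_dvd_of_gcd a3 q3 2 Nat.prime_two ha3 h23
        simp only [if_pos h23]
        omega
      · simp [h23])
  have ha2dvd : ∀ p : ℕ, p.Prime → p ∣ q2 → ¬ (p : ℤ) ∣ a2 := by
    intro p hp hpq
    have := (ha2all p hp hpq).1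
    beta_reduce at this
    intro h
    exact this (by simpa using h)
  have ha2gcd : Int.gcd a2 q2 = 1 := aux_gcd_one a2 q2 hq2' ha2dvd
  have ha2avoid : ∀ p : ℕ, p.Prime → p ∣ Nat.gcd q3 q2 → ¬ (p : ℤ) ∣ (n - (a3 + a2)) := by
    intro p hp hpg
    have hpq2 : p ∣ q2 := hpg.trans (Nat.gcd_dvd_right q3 q2)
    have hpq3 : p ∣ q3 := hpg.trans (Nat.gcd_dvd_left q3 q2)
    have := (ha2all p hp hpq2).2
    beta_reduce at this
    rw [if_pos hpq3] at this
    intro h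
    apply this
    have he : (1 : ℤ) * a2 - (n - a3) = -(n - (a3 + a2)) := by ring
    rw [he]
    exact dvd_neg.mpr h
  refine ⟨a2, ha2gcd, ha2avoid, ?_⟩
  -- Step 2: given q1, construct a1
  intro q1 hq1
  have hq1' : q1 ≠ 0 := by omega
  set g := Nat.gcd q1 (Nat.gcd q2 q3) with hgdef
  set c : ℤ := n - a2 - a3 with hcdef
  obtain ⟨t, htall⟩ := aux_key q1 hq1'
    (fun p => if p ∣ g then 1 else (g : ℤ))
    (fun p => if p ∣ g then 1 else -c)
    (fun p => if p ∣ g then 1 else if p ∣ q2 then a3 else if p ∣ q3 then a2 else -c)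
    (fun p hp hpq1 => by
      by_cases hpg : p ∣ g
      · simp only [if_pos hpg]
        intro h
        have h' : (p : ℤ) ∣ (1 : ℤ) := h
        have : p ∣ 1 := by exact_mod_cast h'
        exact hp.one_lt.ne' (Nat.eq_one_of_dvd_one this)
      · simp only [if_neg hpg]
        intro h
        have h' : (p : ℤ) ∣ (g : ℤ) := h
        exact hpg (by exact_mod_cast h'))
    (by
      intro h2q1
      by_cases h2g : 2 ∣ g
      · simp [h2g]
      · simp only [if_neg h2g]
        by_cases h2q2 : 2 ∣ q2
        · have ha2odd : ¬ (2 : ℤ) ∣ a2 := aux_not_dvd_of_gcd a2 q2 2 Nat.prime_two ha2gcd h2q2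
          simp only [if_pos h2q2, hcdef]
          omega
        · simp only [if_neg h2q2]
          by_cases h2q3 : 2 ∣ q3
          · have ha3odd : ¬ (2 : ℤ) ∣ a3 := aux_not_dvd_of_gcd a3 q3 2 Nat.prime_two ha3 h2q3
            simp only [if_pos h2q3, hcdef]
            omega
          · simp [h2q3])
  refine ⟨c + (g : ℤ) * t, ?_, ?_, ?_, ?_⟩
  · -- gcd (a1, q1) = 1
    apply aux_gcd_one _ q1 hq1'
    intro p hp hpq1
    by_cases hpg : p ∣ g
    · have hpq2 : p ∣ q2 := hpg.trans ((Nat.gcd_dvd_right q1 _).trans (Nat.gcd_dvd_left q2 q3))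
      have hpq3 : p ∣ q3 := hpg.trans ((Nat.gcd_dvd_right q1 _).trans (Nat.gcd_dvd_right q2 q3))
      have hnc : ¬ (p : ℤ) ∣ c := by
        intro h
        apply ha2avoid p hp (Nat.dvd_gcd hpq3 hpq2)
        have he : n - (a3 + a2) = c := by rw [hcdef]; ring
        rw [he]; exact h
      intro h
      apply hnc
      have hgt : (p : ℤ) ∣ (g : ℤ) * t :=
        Dvd.dvd.mul_right (Int.natCast_dvd_natCast.mpr hpg) t
      have he : c = (c + (g : ℤ) * t) - (g : ℤ) * t := by ring
      rw [he]
      exact h.sub hgt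
    · have := (htall p hp hpq1).1
      beta_reduce at this
      rw [if_neg hpg, if_neg hpg] at this
      intro h
      apply this
      have he : (g : ℤ) * t - (-c) = c + (g : ℤ) * t := by ring
      rw [he]
      exact h
  · -- divisibility by g
    refine ⟨-t, ?_⟩
    rw [hcdef]; ring
  · -- condition (2)
    intro p hp hpg12 hpq3
    have hpq1 : p ∣ q1 := hpg12.trans (Nat.gcd_dvd_left q1 q2)
    have hpq2 : p ∣ q2 := hpg12.trans (Nat.gcd_dvd_right q1 q2)
    have hpg : ¬ p ∣ g := by
      intro h
      exact hpq3 (h.trans ((Nat.gcd_dvd_right q1 _).trans (Nat.gcd_dvd_right q2 q3)))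
    have := (htall p hp hpq1).2
    beta_reduce at this
    rw [if_neg hpg, if_neg hpg, if_pos hpq2] at this
    intro h
    apply this
    have he : (g : ℤ) * t - a3 = -(n - (c + (g : ℤ) * t + a2)) := by rw [hcdef]; ring
    rw [he]
    exact dvd_neg.mpr h
  · -- condition (3)
    intro p hp hpg13 hpq2
    have hpq1 : p ∣ q1 := hpg13.trans (Nat.gcd_dvd_left q1 q3)
    have hpq3 : p ∣ q3 := hpg13.trans (Nat.gcd_dvd_right q1 q3)
    have hpg : ¬ p ∣ g := by
      intro h
      exact hpq2 (h.trans ((Nat.gcd_dvd_right q1 _).trans (Nat.gcd_dvd_left q2 q3)))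
    have := (htall p hp hpq1).2
    beta_reduce at this
    rw [if_neg hpg, if_neg hpg, if_neg hpq2, if_pos hpq3] at this
    intro h
    apply this
    have he : (g : ℤ) * t - a2 = -(n - (c + (g : ℤ) * t + a3)) := by rw [hcdef]; ring
    rw [he]
    exact dvd_neg.mpr h
end
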